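/- Let q ≥ p > 0 be integers, λ ≥ 0, z > 0, and a := λ/(z + λ) ∈ [0,1). For J ≥ 0, the truncation error of the series (1−a)^{p/2} ∑_{j=0}^∞ (a^j (p/2)_j / j!) F_{χ²(q+2j)}(z+λ) after J+1 terms satisfies (1−a)^{p/2} ∑_{j=J+1}^∞ (a^j (p/2)_j/j!) F_{χ²(q+2j)}(z+λ) ≤ F_{χ²(q+2J+2)}(z+λ) · (a^{J+1}(p/2)_{J+1}/(J+1)!) · (1 + 2/√(−log a)). -/

import Mathlib

/-- Cumulative distribution function of the chi-squared distribution with `d`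
degrees of freedom (for `z > 0`). -/
noncomputable def chiSqCDF (d : ℝ) (z : ℝ) : ℝ :=
  ∫ x in Set.Ioc (0 : ℝ) z,
    x ^ (d / 2 - 1) * Real.exp (-x / 2) / (2 ^ (d / 2) * Real.Gamma (d / 2))

/-- Pochhammer symbol `(x)_j = x(x+1)⋯(x+j−1)`. -/
noncomputable def poch (x : ℝ) (j : ℕ) : ℝ := ∏ i ∈ Finset.range j, (x + i)


open MeasureTheory Set

lemma aux_integrable {r t : ℝ} (hr : -1 < r) (ht : 0 ≤ t) :
    IntegrableOn (fun x => x ^ r * Real.exp (-x / 2)) (Set.Ioc 0 t) := by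
  have h1 : IntegrableOn (fun x : ℝ => x ^ r) (Set.Ioc 0 t) :=
    (intervalIntegrable_iff_integrableOn_Ioc_of_le ht).1
      (intervalIntegral.intervalIntegrable_rpow' hr)
  refine MeasureTheory.Integrable.mono h1 ?_ ?_
  · apply ContinuousOn.aestronglyMeasurable _ measurableSet_Ioc
    intro x hx
    exact ((Real.continuousAt_rpow_const x r (Or.inl hx.1.ne')).mul
      ((Real.continuous_exp.comp (continuous_id.neg.div_const 2)).continuousAt)).continuousWithinAt
  · rw [MeasureTheory.ae_restrict_iff' measurableSet_Ioc]
    filter_upwards with x hx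
    rw [norm_mul, Real.norm_eq_abs, Real.norm_eq_abs]
    have h2 : |Real.exp (-x / 2)| ≤ 1 := by
      rw [abs_of_pos (Real.exp_pos _)]
      exact Real.exp_le_one_iff.2 (by linarith [hx.1])
    exact mul_le_of_le_one_right (abs_nonneg _) h2

lemma key_ftc {d t : ℝ} (hd : 0 < d) (ht : 0 < t) :
    ∫ x in Set.Ioc (0:ℝ) t, x ^ (d/2) * Real.exp (-x/2)
      ≤ d * ∫ x in Set.Ioc (0:ℝ) t, x ^ (d/2-1) * Real.exp (-x/2) := by
  set ν := d/2 with hνdef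
  have hν : 0 < ν := by positivity
  have hI1 : IntegrableOn (fun x => x ^ (ν-1) * Real.exp (-x/2)) (Set.Ioc 0 t) :=
    aux_integrable (by linarith) ht.le
  have hI2 : IntegrableOn (fun x => x ^ ν * Real.exp (-x/2)) (Set.Ioc 0 t) :=
    aux_integrable (by linarith) ht.le
  have hJ1 : IntervalIntegrable (fun x => x ^ (ν-1) * Real.exp (-x/2)) volume 0 t :=
    (intervalIntegrable_iff_integrableOn_Ioc_of_le ht.le).2 hI1
  have hJ2 : IntervalIntegrable (fun x => x ^ ν * Real.exp (-x/2)) volume 0 t :=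
    (intervalIntegrable_iff_integrableOn_Ioc_of_le ht.le).2 hI2
  have hftc : ∫ x in (0:ℝ)..t,
      (ν * (x ^ (ν-1) * Real.exp (-x/2)) - (x ^ ν * Real.exp (-x/2)) / 2)
      = t ^ ν * Real.exp (-t/2) - 0 := by
    apply intervalIntegral.integral_eq_sub_of_hasDerivAt_of_tendsto (f := fun x => x ^ ν * Real.exp (-x/2)) ht
    · intro x hx
      have hx0 : 0 < x := hx.1
      have h1 : HasDerivAt (fun y : ℝ => y ^ ν) (ν * x ^ (ν-1)) x :=
        Real.hasDerivAt_rpow_const (Or.inl hx0.ne')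
      have h2 : HasDerivAt (fun y : ℝ => Real.exp (-y/2)) (Real.exp (-x/2) * (-1/2)) x := by
        have h3 : HasDerivAt (fun y : ℝ => -y/2) (-1/2) x := by
          simpa using (hasDerivAt_id x).neg.div_const 2
        exact h3.exp
      exact (h1.mul h2).congr_deriv (by ring)
    · exact ((hJ1.const_mul ν).sub (hJ2.div_const 2))
    · have h4 : Filter.Tendsto (fun x : ℝ => x ^ ν) (nhdsWithin 0 (Set.Ioi 0)) (nhds 0) := by
        have := (Real.continuousAt_rpow_const 0 ν (Or.inr hν.le)).tendsto
        rw [Real.zero_rpow hν.ne'] at this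
        exact this.mono_left nhdsWithin_le_nhds
      have h5 : Filter.Tendsto (fun x : ℝ => Real.exp (-x/2)) (nhdsWithin 0 (Set.Ioi 0))
          (nhds 1) := by
        have : Filter.Tendsto (fun x : ℝ => Real.exp (-x/2)) (nhds 0) (nhds (Real.exp (-0/2))) :=
          (Real.continuous_exp.comp (continuous_id.neg.div_const 2)).continuousAt
        simpa using this.mono_left nhdsWithin_le_nhds
      simpa using h4.mul h5
    · have : Filter.Tendsto (fun x : ℝ => x ^ ν * Real.exp (-x/2)) (nhds t)
          (nhds (t ^ ν * Real.exp (-t/2))) := by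
        apply Filter.Tendsto.mul
        · exact (Real.continuousAt_rpow_const t ν (Or.inl ht.ne')).tendsto
        · exact (Real.continuous_exp.comp (continuous_id.neg.div_const 2)).continuousAt
      exact this.mono_left nhdsWithin_le_nhds
  rw [intervalIntegral.integral_of_le ht.le] at hftc
  rw [MeasureTheory.integral_sub ((hI1.const_mul ν)) (hI2.div_const 2)] at hftc
  rw [MeasureTheory.integral_const_mul, MeasureTheory.integral_div] at hftc
  have hpos : 0 ≤ t ^ ν * Real.exp (-t/2) := by positivity
  have : d = 2 * ν := by rw [hνdef]; ring
  rw [this]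
  linarith

lemma chiSq_nonneg {d t : ℝ} (hd : 0 < d) : 0 ≤ chiSqCDF d t := by
  apply MeasureTheory.setIntegral_nonneg measurableSet_Ioc
  intro x hx
  have hx0 : 0 < x := hx.1
  have hG : 0 < Real.Gamma (d / 2) := Real.Gamma_pos_of_pos (by positivity)
  positivity

lemma chiSq_eq (d t : ℝ) :
    chiSqCDF d t = (∫ x in Set.Ioc (0:ℝ) t, x ^ (d / 2 - 1) * Real.exp (-x / 2))
      / (2 ^ (d / 2) * Real.Gamma (d / 2)) := by
  rw [chiSqCDF, MeasureTheory.integral_div]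

lemma chiSq_step {d t : ℝ} (hd : 0 < d) (ht : 0 < t) : chiSqCDF (d + 2) t ≤ chiSqCDF d t := by
  have hν : 0 < d / 2 := by positivity
  have hG : 0 < Real.Gamma (d / 2) := Real.Gamma_pos_of_pos hν
  have h2 : (0:ℝ) < 2 ^ (d / 2) := Real.rpow_pos_of_pos two_pos _
  rw [chiSq_eq, chiSq_eq]
  have e1 : (d + 2) / 2 - 1 = d / 2 := by ring
  have e2 : (d + 2) / 2 = d / 2 + 1 := by ring
  rw [e1, e2, Real.Gamma_add_one hν.ne', Real.rpow_add two_pos, Real.rpow_one]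
  have hkey := key_ftc hd ht
  have hI1nn : 0 ≤ ∫ x in Set.Ioc (0:ℝ) t, x ^ (d / 2 - 1) * Real.exp (-x / 2) := by
    apply MeasureTheory.setIntegral_nonneg measurableSet_Ioc
    intro x hx
    have hx0 : 0 < x := hx.1
    positivity
  rw [div_le_div_iff₀ (by positivity) (by positivity)]
  have h3 : 0 ≤ (∫ x in Set.Ioc (0:ℝ) t, x ^ (d / 2 - 1) * Real.exp (-x / 2)) * Real.Gamma (d/2) :=
    mul_nonneg hI1nn hG.le
  nlinarith [mul_le_mul_of_nonneg_right hkey (mul_nonneg (mul_nonneg h2.le hG.le) h2.le)]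

lemma chiSq_mono {b t : ℝ} (hb : 0 < b) (ht : 0 < t) (l : ℕ) :
    chiSqCDF (b + 2 * l) t ≤ chiSqCDF b t := by
  induction l with
  | zero => simp
  | succ n ih =>
    have e : b + 2 * ((n:ℝ) + 1) = (b + 2 * n) + 2 := by ring
    have e2 : ((n + 1 : ℕ) : ℝ) = (n : ℝ) + 1 := by push_cast; ring
    rw [e2, e]
    exact (chiSq_step (by positivity) ht).trans ih

lemma poch_nonneg {x : ℝ} (hx : 0 ≤ x) (j : ℕ) : 0 ≤ poch x j :=
  Finset.prod_nonneg fun i _ => by positivity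

lemma poch_pos {x : ℝ} (hx : 0 < x) (j : ℕ) : 0 < poch x j :=
  Finset.prod_pos fun i _ => by positivity

lemma poch_add (x : ℝ) (m n : ℕ) : poch x (m + n) = poch x m * poch (x + m) n := by
  rw [poch, poch, poch, Finset.prod_range_add]
  congr 1
  exact Finset.prod_congr rfl fun i _ => by push_cast; ring

lemma poch_one (l : ℕ) : poch 1 l = l.factorial := by
  induction l with
  | zero => simp [poch]
  | succ n ih =>
    rw [poch, Finset.prod_range_succ, ← poch, ih, Nat.factorial_succ]
    push_cast; ring

lemma factorial_poch (m l : ℕ) :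
    (((m + l).factorial : ℝ)) = (m.factorial : ℝ) * poch ((m : ℝ) + 1) l := by
  induction l with
  | zero => simp [poch]
  | succ n ih =>
    have e : m + (n + 1) = (m + n) + 1 := by omega
    rw [e, Nat.factorial_succ, poch, Finset.prod_range_succ, ← poch]
    push_cast
    push_cast at ih
    rw [ih]; ring

lemma poch_nat_choose (M l : ℕ) (hM : 1 ≤ M) :
    poch (M : ℝ) l = ((l + (M - 1)).choose (M - 1) : ℝ) * l.factorial := by
  obtain ⟨m, rfl⟩ : ∃ m, M = m + 1 := ⟨M - 1, by omega⟩
  have h1 : ((m : ℝ) + 1) = ((m : ℕ) : ℝ) + 1 := by push_cast; ring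
  have h2 := factorial_poch m l
  have h3 := Nat.add_choose_mul_factorial_mul_factorial l m
  have hpos : (0:ℝ) < (m.factorial : ℝ) := by positivity
  simp only [Nat.add_sub_cancel]
  have h3' : (((l + m).choose m : ℝ)) * (l.factorial : ℝ) * (m.factorial : ℝ)
      = ((l + m).factorial : ℝ) := by exact_mod_cast congrArg Nat.cast h3
  have e : poch ((m:ℝ) + 1) l * (m.factorial : ℝ) = ((m + l).factorial : ℝ) := by
    rw [h2]; ring
  have : ((m + l).factorial : ℝ) = ((l + m).factorial : ℝ) := by rw [Nat.add_comm]
  push_cast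
  nlinarith [e, h3', this]

lemma binom_series {a : ℝ} (ha0 : 0 ≤ a) (ha1 : a < 1) (M : ℕ) (hM : 1 ≤ M) :
    HasSum (fun l : ℕ => a ^ l * poch (M : ℝ) l / l.factorial)
      (1 / (1 - a) ^ M) := by
  have hr : ‖a‖ < 1 := by rw [Real.norm_eq_abs, abs_of_nonneg ha0]; exact ha1
  have h := hasSum_choose_mul_geometric_of_norm_lt_one (𝕜 := ℝ) (M - 1) hr
  have hMe : M - 1 + 1 = M := by omega
  rw [hMe] at h
  convert h using 2 with l
  · rfl
  rw [poch_nat_choose M l hM]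
  have : (0:ℝ) < (l.factorial : ℝ) := by positivity
  field_simp

lemma sqrt_bound {a : ℝ} (ha0 : 0 ≤ a) (ha1 : a < 1) :
    (1 - a) ^ (-(1:ℝ)/2) ≤ 1 + 2 / Real.sqrt (-Real.log a) := by
  rcases eq_or_lt_of_le ha0 with h0 | h0
  · rw [← h0]
    norm_num [Real.rpow_natCast]
  · have h1a : (0:ℝ) < 1 - a := by linarith
    have hla : 0 < -Real.log a := by linarith [Real.log_neg h0 ha1]
    have hkey : (-Real.log a) * a ≤ 1 - a := by
      have h := Real.log_le_sub_one_of_pos (show (0:ℝ) < a⁻¹ by positivity)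
      rw [Real.log_inv] at h
      have := mul_le_mul_of_nonneg_right h h0.le
      rw [sub_mul, inv_mul_cancel₀ h0.ne'] at this
      nlinarith
    set u := Real.sqrt (1 - a) with hu
    set v := Real.sqrt a with hv
    set w := Real.sqrt (-Real.log a) with hw
    have hu0 : 0 < u := Real.sqrt_pos.2 h1a
    have hv0 : 0 < v := Real.sqrt_pos.2 h0
    have hw0 : 0 < w := Real.sqrt_pos.2 hla
    have hu2 : u ^ 2 = 1 - a := Real.sq_sqrt h1a.le
    have hv2 : v ^ 2 = a := Real.sq_sqrt ha0
    have hwv : w * v ≤ u := by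
      rw [hw, hv, hu, ← Real.sqrt_mul hla.le]
      exact Real.sqrt_le_sqrt hkey
    have hlhs : (1 - a) ^ (-(1:ℝ)/2) = 1 / u := by
      rw [show (-(1:ℝ)/2) = -(1/2) by ring, Real.rpow_neg h1a.le, hu, Real.sqrt_eq_rpow]
      norm_num
    rw [hlhs]
    have h1 : 1 ≤ u + 2 * v := by nlinarith [sq_nonneg (u + 2*v)]
    have h2 : w ≤ w * u + 2 * u := by nlinarith [mul_le_mul_of_nonneg_left h1 hw0.le]
    rw [div_le_iff₀ hu0]
    have h3 : (1:ℝ) ≤ u + 2 * u / w := by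
      rw [show u + 2 * u / w = (w * u + 2 * u) / w by field_simp, le_div_iff₀ hw0]
      linarith
    calc (1:ℝ) ≤ u + 2 * u / w := h3
      _ = (1 + 2 / w) * u := by ring

/-- truncation error bound for the power series representation of the
conditional likelihood-ratio critical value function (Hillier's approximation). -/
theorem stmt_16 (p q : ℕ) (hp : 0 < p) (hpq : p ≤ q)
    (lam z : ℝ) (hlam : 0 ≤ lam) (hz : 0 < z)
    (a : ℝ) (ha : a = lam / (z + lam)) (J : ℕ) :
    (1 - a) ^ ((p : ℝ) / 2) *
      ∑' l : ℕ, a ^ (J + 1 + l) * poch ((p : ℝ) / 2) (J + 1 + l) /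
          (Nat.factorial (J + 1 + l)) *
        chiSqCDF ((q : ℝ) + 2 * ((J : ℝ) + 1 + l)) (z + lam)
    ≤ chiSqCDF ((q : ℝ) + 2 * J + 2) (z + lam) *
        (a ^ (J + 1) * poch ((p : ℝ) / 2) (J + 1) / (Nat.factorial (J + 1))) *
        (1 + 2 / Real.sqrt (-Real.log a)) := by
  have hzl : 0 < z + lam := by linarith
  have ha0 : 0 ≤ a := by rw [ha]; exact div_nonneg hlam hzl.le
  have ha1 : a < 1 := by rw [ha]; exact (div_lt_one hzl).2 (by linarith)
  have h1a : 0 < 1 - a := by linarith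
  set t : ℝ := z + lam with htdef
  set s : ℝ := (p : ℝ) / 2 with hsdef
  have hp1 : (1:ℝ) ≤ (p:ℝ) := by exact_mod_cast hp
  have hs : (1:ℝ)/2 ≤ s := by rw [hsdef]; linarith
  set M : ℕ := (p + 1) / 2 with hMdef
  have hM1 : 1 ≤ M := by omega
  have hM1R : (1:ℝ) ≤ (M:ℝ) := by exact_mod_cast hM1
  have hMlbN : p ≤ 2 * M := by omega
  have hMubN : 2 * M ≤ p + 1 := by omega
  have hsM : s ≤ (M:ℝ) := by
    rw [hsdef]
    have : (p:ℝ) ≤ 2 * M := by exact_mod_cast hMlbN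
    linarith
  have hMs : (M:ℝ) ≤ s + 1/2 := by
    rw [hsdef]
    have : (2:ℝ) * M ≤ (p:ℝ) + 1 := by exact_mod_cast hMubN
    linarith
  have hq1 : (1:ℝ) ≤ (q:ℝ) := by exact_mod_cast hp.trans_le hpq
  set F : ℝ := chiSqCDF ((q : ℝ) + 2 * J + 2) t with hFdef
  have hF0 : 0 ≤ F := chiSq_nonneg (by positivity)
  set c : ℝ := s + ((J + 1 : ℕ) : ℝ) with hcdef
  have hc0 : 0 ≤ c := by
    rw [hcdef]; have : (0:ℝ) ≤ ((J + 1 : ℕ) : ℝ) := by positivity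
    linarith
  set d : ℝ := (J : ℝ) + 2 with hddef
  have hdpos : ∀ l : ℕ, 0 < poch d l := fun l => poch_pos (by rw [hddef]; positivity) l
  set head : ℝ := a ^ (J + 1) * poch s (J + 1) / ((J + 1).factorial : ℝ) with hheaddef
  have hhead0 : 0 ≤ head := by
    rw [hheaddef]
    have := poch_nonneg (by linarith : (0:ℝ) ≤ s) (J + 1)
    positivity
  -- termwise functions
  set f : ℕ → ℝ := fun l => a ^ (J + 1 + l) * poch s (J + 1 + l) /
      ((J + 1 + l).factorial : ℝ) * chiSqCDF ((q : ℝ) + 2 * ((J : ℝ) + 1 + l)) t with hfdef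
  set maj : ℕ → ℝ := fun l => head * F * (a ^ l * poch (M : ℝ) l / (l.factorial : ℝ)) with hmajdef
  have hfact : ∀ l : ℕ, ((J + 1 + l).factorial : ℝ) = ((J + 1).factorial : ℝ) * poch d l := by
    intro l
    have h := factorial_poch (J + 1) l
    have e : ((J + 1 : ℕ) : ℝ) + 1 = d := by rw [hddef]; push_cast; ring
    rw [e] at h
    exact h
  have hFl : ∀ l : ℕ, chiSqCDF ((q : ℝ) + 2 * ((J : ℝ) + 1 + l)) t ≤ F := by
    intro l
    have e : (q : ℝ) + 2 * ((J : ℝ) + 1 + l) = ((q : ℝ) + 2 * J + 2) + 2 * l := by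
      push_cast; ring
    rw [e, hFdef]
    exact chiSq_mono (by positivity) (by rw [htdef]; linarith) l
  have hFl0 : ∀ l : ℕ, 0 ≤ chiSqCDF ((q : ℝ) + 2 * ((J : ℝ) + 1 + l)) t := by
    intro l
    apply chiSq_nonneg
    positivity
  have hf_eq : ∀ l : ℕ, f l = head * (a ^ l * poch c l / poch d l) *
      chiSqCDF ((q : ℝ) + 2 * ((J : ℝ) + 1 + l)) t := by
    intro l
    rw [hfdef]
    simp only
    rw [poch_add s (J + 1) l, hfact l, pow_add, hheaddef, ← hcdef]
    have h1 : poch d l ≠ 0 := (hdpos l).ne'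
    have h2 : ((J + 1).factorial : ℝ) ≠ 0 := by positivity
    congr 1
    field_simp
  have hf0 : ∀ l : ℕ, 0 ≤ f l := by
    intro l
    rw [hf_eq l]
    have := poch_nonneg hc0 l
    have := (hdpos l).le
    have := hFl0 l
    positivity
  have hterm : ∀ l : ℕ, a ^ l * poch c l / poch d l ≤ a ^ l * poch (M : ℝ) l /
      (l.factorial : ℝ) := by
    intro l
    have hfac : (0:ℝ) < (l.factorial : ℝ) := by positivity
    have hcross : poch c l * (l.factorial : ℝ) ≤ poch (M : ℝ) l * poch d l := by
      rw [← poch_one l, poch, poch, poch, poch, ← Finset.prod_mul_distrib,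
        ← Finset.prod_mul_distrib]
      apply Finset.prod_le_prod
      · intro i _
        have : (0:ℝ) ≤ c + i := by positivity
        positivity
      · intro i _
        have hi0 : (0:ℝ) ≤ (i:ℝ) := by positivity
        have hJ0 : (0:ℝ) ≤ (J:ℝ) := by positivity
        rw [hcdef, hddef]
        have h2 : ((J + 1 : ℕ) : ℝ) = (J:ℝ) + 1 := by push_cast; ring
        rw [h2]
        nlinarith [mul_nonneg (sub_nonneg.2 hsM) (by linarith : (0:ℝ) ≤ (i:ℝ) + 1),
          mul_nonneg (by linarith : (0:ℝ) ≤ (J:ℝ) + 1) (by linarith : (0:ℝ) ≤ (M:ℝ) - 1)]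
    rw [div_le_div_iff₀ (hdpos l) hfac]
    calc a ^ l * poch c l * (l.factorial : ℝ) = a ^ l * (poch c l * (l.factorial : ℝ)) := by ring
      _ ≤ a ^ l * (poch (M : ℝ) l * poch d l) :=
          mul_le_mul_of_nonneg_left hcross (by positivity)
      _ = a ^ l * poch (M : ℝ) l * poch d l := by ring
  have hf_le : ∀ l : ℕ, f l ≤ maj l := by
    intro l
    rw [hf_eq l, hmajdef]
    simp only
    have h1 : 0 ≤ a ^ l * poch c l / poch d l := by
      have := poch_nonneg hc0 l
      have := (hdpos l).le
      positivity
    calc head * (a ^ l * poch c l / poch d l) * chiSqCDF ((q : ℝ) + 2 * ((J : ℝ) + 1 + l)) t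
        ≤ head * (a ^ l * poch c l / poch d l) * F :=
          mul_le_mul_of_nonneg_left (hFl l) (mul_nonneg hhead0 h1)
      _ ≤ head * (a ^ l * poch (M : ℝ) l / (l.factorial : ℝ)) * F := by
          apply mul_le_mul_of_nonneg_right _ hF0
          exact mul_le_mul_of_nonneg_left (hterm l) hhead0
      _ = head * F * (a ^ l * poch (M : ℝ) l / (l.factorial : ℝ)) := by ring
  have hbs := binom_series ha0 ha1 M hM1
  have hSmaj : Summable maj := by
    rw [hmajdef]
    exact (hbs.summable.mul_left (head * F))
  have hSf : Summable f := Summable.of_nonneg_of_le hf0 hf_le hSmaj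
  have htsum1 : ∑' l, f l ≤ ∑' l, maj l := Summable.tsum_le_tsum hf_le hSf hSmaj
  have htsum2 : ∑' l, maj l = head * F * (1 / (1 - a) ^ M) := by
    rw [hmajdef, tsum_mul_left, hbs.tsum_eq]
  have hfac2 : (1 - a) ^ s * (1 / (1 - a) ^ M) ≤ 1 + 2 / Real.sqrt (-Real.log a) := by
    have e : (1 - a) ^ (s - (M:ℝ)) = (1 - a) ^ s * (1 / (1 - a) ^ M) := by
      rw [Real.rpow_sub h1a, Real.rpow_natCast, div_eq_mul_one_div]
    rw [← e]
    calc (1 - a) ^ (s - (M:ℝ)) ≤ (1 - a) ^ (-(1:ℝ)/2) :=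
          Real.rpow_le_rpow_of_exponent_ge h1a (by linarith) (by linarith)
      _ ≤ 1 + 2 / Real.sqrt (-Real.log a) := sqrt_bound ha0 ha1
  calc (1 - a) ^ s * ∑' l, f l ≤ (1 - a) ^ s * (head * F * (1 / (1 - a) ^ M)) := by
        apply mul_le_mul_of_nonneg_left _ (Real.rpow_nonneg h1a.le s)
        rw [← htsum2]; exact htsum1
    _ = (head * F) * ((1 - a) ^ s * (1 / (1 - a) ^ M)) := by ring
    _ ≤ (head * F) * (1 + 2 / Real.sqrt (-Real.log a)) :=
        mul_le_mul_of_nonneg_left hfac2 (mul_nonneg hhead0 hF0)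
    _ = F * head * (1 + 2 / Real.sqrt (-Real.log a)) := by ring
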